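/- Let μ ∈ (0,1). The channel 𝒲_μ is degradable if and only if μ ≤ 2/3; that is, there exist finitely many 2×3 complex matrices D₁,…,D_n with ∑_k D_k†D_k = I₃ such that ∑_k D_k 𝒲_μ(X) D_k† = 𝒲_μ^c(X) for every X ∈ M₃(ℂ), if and only if μ ≤ 2/3. -/
import Mathlib


open Matrix ComplexOrder

/-- Kraus operator K₀ = (1/√2)|0⟩⟨0| + √(1−μ)|1⟩⟨1| + √μ|2⟩⟨2| of 𝒲_μ. -/
noncomputable def KW0 (μ : ℝ) : Matrix (Fin 3) (Fin 3) ℂ :=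
  !![((1 / Real.sqrt 2 : ℝ) : ℂ), 0, 0;
     0, (Real.sqrt (1 - μ) : ℂ), 0;
     0, 0, (Real.sqrt μ : ℂ)]

/-- Kraus operator K₁ = √(1−μ)|0⟩⟨2| + (1/√2)|1⟩⟨0| + √μ|2⟩⟨1| of 𝒲_μ. -/
noncomputable def KW1 (μ : ℝ) : Matrix (Fin 3) (Fin 3) ℂ :=
  !![0, 0, (Real.sqrt (1 - μ) : ℂ);
     ((1 / Real.sqrt 2 : ℝ) : ℂ), 0, 0;
     0, (Real.sqrt μ : ℂ), 0]

/-- The channel 𝒲_μ = 𝒲_{1/2,μ}. -/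
noncomputable def chanW (μ : ℝ) (X : Matrix (Fin 3) (Fin 3) ℂ) : Matrix (Fin 3) (Fin 3) ℂ :=
  KW0 μ * X * (KW0 μ)ᴴ + KW1 μ * X * (KW1 μ)ᴴ

/-- Kraus operator L₀ = (1/√2)|0⟩⟨0| + √(1−μ)|1⟩⟨2| of 𝒲_μ^c. -/
noncomputable def LW0 (μ : ℝ) : Matrix (Fin 2) (Fin 3) ℂ :=
  !![((1 / Real.sqrt 2 : ℝ) : ℂ), 0, 0;
     0, 0, (Real.sqrt (1 - μ) : ℂ)]

/-- Kraus operator L₁ = (1/√2)|1⟩⟨0| + √(1−μ)|0⟩⟨1| of 𝒲_μ^c. -/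
noncomputable def LW1 (μ : ℝ) : Matrix (Fin 2) (Fin 3) ℂ :=
  !![0, (Real.sqrt (1 - μ) : ℂ), 0;
     ((1 / Real.sqrt 2 : ℝ) : ℂ), 0, 0]

/-- Kraus operator L₂ = √μ|1⟩⟨1| + √μ|0⟩⟨2| of 𝒲_μ^c. -/
noncomputable def LW2 (μ : ℝ) : Matrix (Fin 2) (Fin 3) ℂ :=
  !![0, 0, (Real.sqrt μ : ℂ);
     0, (Real.sqrt μ : ℂ), 0]

/-- The complementary channel 𝒲_μ^c. -/
noncomputable def chanWc (μ : ℝ) (X : Matrix (Fin 3) (Fin 3) ℂ) : Matrix (Fin 2) (Fin 2) ℂ :=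
  LW0 μ * X * (LW0 μ)ᴴ + LW1 μ * X * (LW1 μ)ᴴ + LW2 μ * X * (LW2 μ)ᴴ

set_option maxHeartbeats 1600000

/-- The channel 𝒲_μ is degradable if and only if μ ≤ 2/3. -/
theorem stmt19 (μ : ℝ) (hμ : μ ∈ Set.Ioo (0 : ℝ) 1) :
    (∃ (n : ℕ) (D : Fin n → Matrix (Fin 2) (Fin 3) ℂ),
      (∑ k, (D k)ᴴ * D k) = (1 : Matrix (Fin 3) (Fin 3) ℂ) ∧
      ∀ X : Matrix (Fin 3) (Fin 3) ℂ,
        (∑ k, D k * chanW μ X * (D k)ᴴ) = chanWc μ X) ↔ μ ≤ 2/3 := by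
  obtain ⟨hμ0, hμ1⟩ := hμ
  have hs2 : Real.sqrt 2 * Real.sqrt 2 = 2 := Real.mul_self_sqrt (by norm_num)
  have hs2pos : (0:ℝ) < Real.sqrt 2 := Real.sqrt_pos.mpr (by norm_num)
  have hA : (1 / ((Real.sqrt 2 : ℝ) : ℂ)) * (1 / ((Real.sqrt 2 : ℝ) : ℂ)) = 1/2 := by
    rw [div_mul_div_comm, one_mul]
    rw [show ((Real.sqrt 2 : ℝ) : ℂ) * ((Real.sqrt 2 : ℝ) : ℂ) = ((2:ℝ):ℂ) by
      exact_mod_cast congrArg Complex.ofReal hs2]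
    norm_num
  have hB : ((Real.sqrt (1 - μ) : ℝ) : ℂ) * ((Real.sqrt (1 - μ) : ℝ) : ℂ) = 1 - ((μ:ℝ):ℂ) := by
    exact_mod_cast congrArg Complex.ofReal (Real.mul_self_sqrt (by linarith : (0:ℝ) ≤ 1 - μ))
  have hC : ((Real.sqrt μ : ℝ) : ℂ) * ((Real.sqrt μ : ℝ) : ℂ) = ((μ:ℝ):ℂ) := by
    exact_mod_cast congrArg Complex.ofReal (Real.mul_self_sqrt hμ0.le)
  constructor
  · -- degradable → μ ≤ 2/3
    rintro ⟨n, D, hsum, hch⟩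
    by_contra hgt
    push_neg at hgt
    set X₀ : Matrix (Fin 3) (Fin 3) ℂ := !![((2 - 2*μ : ℝ) : ℂ), 0, 0; 0, 1, 0; 0, 0, -1] with hX₀
    have hY : chanW μ X₀ = !![0,0,0; 0,((2 - 2*μ : ℝ) : ℂ),0; 0,0,0] := by
      unfold chanW KW0 KW1
      ext i j
      fin_cases i <;> fin_cases j <;>
        simp [Matrix.mul_apply, Fin.sum_univ_succ, hX₀, Matrix.vecMul, dotProduct, Matrix.vecHead, Matrix.vecTail, Matrix.conjTranspose_apply] <;>
        push_cast <;>
        first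
        | ring1
        | linear_combination ((2:ℂ) - 2*((μ:ℝ):ℂ)) * hA + hB
        | linear_combination ((2:ℂ) - 2*((μ:ℝ):ℂ)) * hA - hB
    have hWc00 : chanWc μ X₀ 0 0 = ((2 - 3*μ : ℝ) : ℂ) := by
      unfold chanWc LW0 LW1 LW2
      simp [Matrix.mul_apply, Fin.sum_univ_succ, hX₀, Matrix.vecMul, dotProduct, Matrix.vecHead, Matrix.vecTail, Matrix.conjTranspose_apply]
      push_cast
      linear_combination ((2:ℂ) - 2*((μ:ℝ):ℂ)) * hA + hB - hC
    have h00 : (∑ k, D k * chanW μ X₀ * (D k)ᴴ) 0 0 = chanWc μ X₀ 0 0 := by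
      rw [hch X₀]
    rw [hWc00, Matrix.sum_apply] at h00
    have hterm : ∀ k, (D k * chanW μ X₀ * (D k)ᴴ) 0 0
        = ((2 - 2*μ : ℝ) : ℂ) * ((Complex.normSq (D k 0 1) : ℝ) : ℂ) := by
      intro k
      rw [hY]
      simp [Matrix.mul_apply, Fin.sum_univ_succ, Matrix.conjTranspose_apply, Matrix.vecMul, dotProduct, Matrix.vecHead, Matrix.vecTail]
      simp only [← Complex.mul_conj]
      push_cast
      ring
    rw [Finset.sum_congr rfl (fun k _ => hterm k)] at h00
    have hre := congrArg Complex.re h00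
    rw [Complex.re_sum] at hre
    simp only [Complex.ofReal_mul, Complex.mul_re, Complex.ofReal_re, Complex.ofReal_im,
      mul_zero, zero_mul, sub_zero] at hre
    have hnn : (0:ℝ) ≤ ∑ k : Fin n, (2 - 2*μ) * Complex.normSq (D k 0 1) := by
      apply Finset.sum_nonneg
      intro k _
      exact mul_nonneg (by linarith) (Complex.normSq_nonneg _)
    rw [hre] at hnn
    linarith
  · -- μ ≤ 2/3 → degradable
    intro h23
    have hE : ((Real.sqrt (2 - 3 * μ) : ℝ) : ℂ) * ((Real.sqrt (2 - 3 * μ) : ℝ) : ℂ)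
        = 2 - 3*((μ:ℝ):ℂ) := by
      have := Real.mul_self_sqrt (by linarith : (0:ℝ) ≤ 2 - 3*μ)
      exact_mod_cast congrArg Complex.ofReal this
    have h2m : (0:ℝ) < 2 - 2*μ := by linarith
    have hGr : (Real.sqrt (2 - 2*μ))⁻¹ * (Real.sqrt (2 - 2*μ))⁻¹ * (2 - 2*μ) = 1 := by
      rw [← mul_inv]
      rw [Real.mul_self_sqrt h2m.le]
      field_simp
    have hG : (((Real.sqrt (2 - 2 * μ) : ℝ) : ℂ))⁻¹ * (((Real.sqrt (2 - 2 * μ) : ℝ) : ℂ))⁻¹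
        * (2 - 2*((μ:ℝ):ℂ)) = 1 := by
      exact_mod_cast congrArg Complex.ofReal hGr
    refine ⟨3, ![(((Real.sqrt (2 - 2*μ))⁻¹ : ℝ) : ℂ) •
        !![(Real.sqrt μ : ℂ), 0, 0; 0, 0, (Real.sqrt (1 - μ) : ℂ)],
      (((Real.sqrt (2 - 2*μ))⁻¹ : ℝ) : ℂ) •
        !![0, 0, (Real.sqrt (1 - μ) : ℂ); 0, (Real.sqrt μ : ℂ), 0],
      (((Real.sqrt (2 - 2*μ))⁻¹ : ℝ) : ℂ) •
        !![0, (Real.sqrt (2 - 3*μ) : ℂ), 0; (Real.sqrt (2 - 3*μ) : ℂ), 0, 0]], ?_, ?_⟩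
    · ext i j
      rw [Fin.sum_univ_three]
      fin_cases i <;> fin_cases j <;>
        simp [Matrix.mul_apply, Fin.sum_univ_succ, Matrix.conjTranspose_apply, Matrix.one_apply, Matrix.vecMul, dotProduct, Matrix.vecHead, Matrix.vecTail] <;>
        push_cast <;>
        first
        | ring1
        | (linear_combination (((Real.sqrt (2 - 2 * μ) : ℝ) : ℂ))⁻¹ *
             (((Real.sqrt (2 - 2 * μ) : ℝ) : ℂ))⁻¹ * hC +
             (((Real.sqrt (2 - 2 * μ) : ℝ) : ℂ))⁻¹ *
             (((Real.sqrt (2 - 2 * μ) : ℝ) : ℂ))⁻¹ * hE + hG)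
        | (linear_combination (2 : ℂ) * (((Real.sqrt (2 - 2 * μ) : ℝ) : ℂ))⁻¹ *
             (((Real.sqrt (2 - 2 * μ) : ℝ) : ℂ))⁻¹ * hB + hG)
    · intro X
      unfold chanW chanWc KW0 KW1 LW0 LW1 LW2
      ext i j
      rw [Fin.sum_univ_three]
      fin_cases i <;> fin_cases j <;>
        simp [Matrix.mul_apply, Fin.sum_univ_succ, Matrix.conjTranspose_apply, Matrix.vecMul, dotProduct, Matrix.vecHead, Matrix.vecTail] <;>
        push_cast
      · linear_combination ((1) * (1 / ((Real.sqrt 2 : ℝ) : ℂ)) * (1 / ((Real.sqrt 2 : ℝ) : ℂ)) * X 0 0 + (1) * ((Real.sqrt (1 - μ) : ℝ) : ℂ) * ((Real.sqrt (1 - μ) : ℝ) : ℂ) * X 1 1 + (1) * ((Real.sqrt μ : ℝ) : ℂ) * ((Real.sqrt μ : ℝ) : ℂ) * X 2 2) * hG + (((Real.sqrt (2 - 2 * μ) : ℝ) : ℂ))⁻¹ * (((Real.sqrt (2 - 2 * μ) : ℝ) : ℂ))⁻¹ * ((1) * ((Real.sqrt μ : ℝ) : ℂ) * ((Real.sqrt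 μ : ℝ) : ℂ) * X 0 0 + (1) * ((Real.sqrt (2 - 3 * μ) : ℝ) : ℂ) * ((Real.sqrt (2 - 3 * μ) : ℝ) : ℂ) * X 0 0 + (2) * ((μ : ℝ) : ℂ) * X 0 0 + (-2) * X 0 0) * hA + (((Real.sqrt (2 - 2 * μ) : ℝ) : ℂ))⁻¹ * (((Real.sqrt (2 - 2 * μ) : ℝ) : ℂ))⁻¹ * ((1) * ((Real.sqrt μ : ℝ) : ℂ) * ((Real.sqrt μ : ℝ) : ℂ) * X 1 1 + (2) * ((Real.sqrt μ : ℝ) : ℂ) * ((Real.sqrt μ : ℝ) : ℂ) * X 2 2 + (1) * ((Real.sqrt (2 - 3 * μ) : ℝ) : ℂ) * ((Real.sqrt (2 - 3 * μ) : ℝ) : ℂ) * X 1 1 + (2) * ((μ : ℝ) : ℂ) * X 1 1 + (-2) * X 1 1) * hB + (((Real.sqrt (2 - 2 * μ) : ℝ) : ℂ))⁻¹ * (((Real.sqrt (2 - 2 * μ) : ℝ) : ℂ))⁻¹ * ((-1) * ((μ : ℝ) : ℂ) * X 1 1 + (1/2) * X 0 0 + (1) * X 1 1) * hC + (((Real.sqrt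 (2 - 2 * μ) : ℝ) : ℂ))⁻¹ * (((Real.sqrt (2 - 2 * μ) : ℝ) : ℂ))⁻¹ * ((-1) * ((μ : ℝ) : ℂ) * X 1 1 + (1/2) * X 0 0 + (1) * X 1 1) * hE
      · linear_combination ((1) * (1 / ((Real.sqrt 2 : ℝ) : ℂ)) * ((Real.sqrt (1 - μ) : ℝ) : ℂ) * X 0 2 + (1) * (1 / ((Real.sqrt 2 : ℝ) : ℂ)) * ((Real.sqrt (1 - μ) : ℝ) : ℂ) * X 1 0 + (1) * ((Real.sqrt μ : ℝ) : ℂ) * ((Real.sqrt μ : ℝ) : ℂ) * X 2 1) * hG + (((Real.sqrt (2 - 2 * μ) : ℝ) : ℂ))⁻¹ * (((Real.sqrt (2 - 2 * μ) : ℝ) : ℂ))⁻¹ * ((2) * ((Real.sqrt μ : ℝ) : ℂ) * ((Real.sqrt μ : ℝ) : ℂ) * X 2 1) * hB + (((Real.sqrt (2 - 2 * μ) : ℝ) : ℂ))⁻¹ * (((Real.sqrt (2 - 2 * μ) : ℝ) : ℂ))⁻¹ * ((1) * (1 / ((Real.sqrt 2 : ℝ) : ℂ)) * ((Real.sqrt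 (1 - μ) : ℝ) : ℂ) * X 0 2 + (1) * (1 / ((Real.sqrt 2 : ℝ) : ℂ)) * ((Real.sqrt (1 - μ) : ℝ) : ℂ) * X 1 0) * hC + (((Real.sqrt (2 - 2 * μ) : ℝ) : ℂ))⁻¹ * (((Real.sqrt (2 - 2 * μ) : ℝ) : ℂ))⁻¹ * ((1) * (1 / ((Real.sqrt 2 : ℝ) : ℂ)) * ((Real.sqrt (1 - μ) : ℝ) : ℂ) * X 0 2 + (1) * (1 / ((Real.sqrt 2 : ℝ) : ℂ)) * ((Real.sqrt (1 - μ) : ℝ) : ℂ) * X 1 0) * hE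
      · linear_combination ((1) * (1 / ((Real.sqrt 2 : ℝ) : ℂ)) * ((Real.sqrt (1 - μ) : ℝ) : ℂ) * X 0 1 + (1) * (1 / ((Real.sqrt 2 : ℝ) : ℂ)) * ((Real.sqrt (1 - μ) : ℝ) : ℂ) * X 2 0 + (1) * ((Real.sqrt μ : ℝ) : ℂ) * ((Real.sqrt μ : ℝ) : ℂ) * X 1 2) * hG + (((Real.sqrt (2 - 2 * μ) : ℝ) : ℂ))⁻¹ * (((Real.sqrt (2 - 2 * μ) : ℝ) : ℂ))⁻¹ * ((2) * ((Real.sqrt μ : ℝ) : ℂ) * ((Real.sqrt μ : ℝ) : ℂ) * X 1 2) * hB + (((Real.sqrt (2 - 2 * μ) : ℝ) : ℂ))⁻¹ * (((Real.sqrt (2 - 2 * μ) : ℝ) : ℂ))⁻¹ * ((1) * (1 / ((Real.sqrt 2 : ℝ) : ℂ)) * ((Real.sqrt (1 - μ) : ℝ) : ℂ) * X 0 1 + (1) * (1 / ((Real.sqrt 2 : ℝ) : ℂ)) * ((Real.sqrt (1 - μ) : ℝ) : ℂ) * X 2 0) * hC + (((Real.sqrt (2 - 2 * μ) : ℝ)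 : ℂ))⁻¹ * (((Real.sqrt (2 - 2 * μ) : ℝ) : ℂ))⁻¹ * ((1) * (1 / ((Real.sqrt 2 : ℝ) : ℂ)) * ((Real.sqrt (1 - μ) : ℝ) : ℂ) * X 0 1 + (1) * (1 / ((Real.sqrt 2 : ℝ) : ℂ)) * ((Real.sqrt (1 - μ) : ℝ) : ℂ) * X 2 0) * hE
      · linear_combination ((1) * (1 / ((Real.sqrt 2 : ℝ) : ℂ)) * (1 / ((Real.sqrt 2 : ℝ) : ℂ)) * X 0 0 + (1) * ((Real.sqrt (1 - μ) : ℝ) : ℂ) * ((Real.sqrt (1 - μ) : ℝ) : ℂ) * X 2 2 + (1) * ((Real.sqrt μ : ℝ) : ℂ) * ((Real.sqrt μ : ℝ) : ℂ) * X 1 1) * hG + (((Real.sqrt (2 - 2 * μ) : ℝ) : ℂ))⁻¹ * (((Real.sqrt (2 - 2 * μ) : ℝ) : ℂ))⁻¹ * ((1) * ((Real.sqrt μ : ℝ) : ℂ) * ((Real.sqrt μ : ℝ) : ℂ) * X 0 0 + (1) * ((Real.sqrt (2 - 3 * μ) : ℝ) : ℂ) * ((Real.sqrt (2 - 3 * μ)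 : ℝ) : ℂ) * X 0 0 + (2) * ((μ : ℝ) : ℂ) * X 0 0 + (-2) * X 0 0) * hA + (((Real.sqrt (2 - 2 * μ) : ℝ) : ℂ))⁻¹ * (((Real.sqrt (2 - 2 * μ) : ℝ) : ℂ))⁻¹ * ((2) * ((Real.sqrt μ : ℝ) : ℂ) * ((Real.sqrt μ : ℝ) : ℂ) * X 1 1 + (1) * ((Real.sqrt μ : ℝ) : ℂ) * ((Real.sqrt μ : ℝ) : ℂ) * X 2 2 + (1) * ((Real.sqrt (2 - 3 * μ) : ℝ) : ℂ) * ((Real.sqrt (2 - 3 * μ) : ℝ) : ℂ) * X 2 2 + (2) * ((μ : ℝ) : ℂ) * X 2 2 + (-2) * X 2 2) * hB + (((Real.sqrt (2 - 2 * μ) : ℝ) : ℂ))⁻¹ * (((Real.sqrt (2 - 2 * μ) : ℝ) : ℂ))⁻¹ * ((-1) * ((μ : ℝ) : ℂ) * X 2 2 + (1/2) * X 0 0 + (1) * X 2 2) * hC + (((Real.sqrt (2 - 2 * μ) : ℝ) : ℂ))⁻¹ * (((Real.sqrt (2 - 2 * μ) : ℝ) : ℂ))⁻¹ * ((-1) *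 ((μ : ℝ) : ℂ) * X 2 2 + (1/2) * X 0 0 + (1) * X 2 2) * hE
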